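/- In a k-symmetric classification problem, error rate balance implies accuracy balance, and the converse holds if and only if k = 2: for k ≥ 3 there exists an algorithm (with symmetric signals) satisfying accuracy balance but violating error rate balance. -/

import Mathlib

open Finset

/-- In k-symmetric classification problems, error rate balance implies
accuracy balance; the converse holds iff k = 2: for row-stochastic conditional
decision kernels accuracy balance implies error rate balance when k = 2, while
for every k ≥ 3 there is a counterexample. -/
theorem erb_vs_accuracy_balance :
    -- ERB implies AB in any k-SCP
    (∀ (k : ℕ) (G : Type) (P : G → Fin k → Fin k → ℝ),
      (∀ g g' β d, P g β d = P g' β d) → (∀ g g' β, P g β β = P g' β β)) ∧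
    -- AB implies ERB when k = 2
    (∀ (G : Type) (P : G → Fin 2 → Fin 2 → ℝ),
      (∀ g β, ∑ d : Fin 2, P g β d = 1) →
      (∀ g g' β, P g β β = P g' β β) →
      (∀ g g' β d, P g β d = P g' β d)) ∧
    -- for k ≥ 3 accuracy balance does not imply error rate balance
    (∀ k : ℕ, 3 ≤ k →
      ∃ P : Bool → Fin k → Fin k → ℝ,
        (∀ g β d, 0 ≤ P g β d) ∧
        (∀ g β, ∑ d : Fin k, P g β d = 1) ∧
        (∀ g g' β, P g β β = P g' β β) ∧
        ¬(∀ g g' β d, P g β d = P g' β d)) := by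
  refine ⟨fun k G P h g g' β => h g g' β β, ?_, ?_⟩
  · intro G P hsum hacc g g' β d
    by_cases hd : d = β
    · subst hd; exact hacc g g' d
    · have h1 : P g β β + P g β d = 1 := by
        fin_cases β <;> fin_cases d <;> simp_all [Fin.sum_univ_two] <;>
          linarith [(hsum g).1, (hsum g).2]
      have h2 : P g' β β + P g' β d = 1 := by
        fin_cases β <;> fin_cases d <;> simp_all [Fin.sum_univ_two] <;>
          linarith [(hsum g').1, (hsum g').2]
      have := hacc g g' β
      linarith
  · intro k hk
    haveI : NeZero k := ⟨by omega⟩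
    have hk1 : (1 : ℝ) ≤ (k : ℝ) - 1 := by
      have : (3 : ℝ) ≤ (k : ℝ) := by exact_mod_cast hk
      linarith
    have hkne : (k : ℝ) - 1 ≠ 0 := by linarith
    have hne : ∀ β : Fin k, β + 1 ≠ β := by
      intro β h
      have h1 : (1 : Fin k) = 0 := add_eq_left.mp h
      rw [Fin.one_eq_zero_iff] at h1
      omega
    refine ⟨fun g β d => if g then (if d = β then 0 else 1 / ((k : ℝ) - 1))
        else (if d = β + 1 then 1 else 0), ?_, ?_, ?_, ?_⟩
    · intro g β d
      rcases g <;> simp <;> split <;> positivity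
    · intro g β
      rcases g
      · simp
      · simp only [if_true, Bool.cond_true]
        have hrw : (∑ x : Fin k, if x = β then (0:ℝ) else 1 / ((k:ℝ) - 1)) =
            ∑ x : Fin k, ((1 / ((k:ℝ) - 1)) - if x = β then 1 / ((k:ℝ) - 1) else 0) := by
          refine Finset.sum_congr rfl fun x _ => ?_
          split <;> simp
        rw [hrw, Finset.sum_sub_distrib, Finset.sum_ite_eq' Finset.univ β]
        simp only [Finset.mem_univ, if_true, Finset.sum_const, Finset.card_univ,
          Fintype.card_fin, nsmul_eq_mul]
        field_simp
    · intro g g' β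
      rcases g <;> rcases g' <;> simp [hne β, (hne β).symm, Ne.symm (hne β)]
    · intro h
      have h2k : 2 < k := by omega
      have key := h true false ⟨0, by omega⟩ ⟨2, h2k⟩
      have e1 : (⟨2, h2k⟩ : Fin k) ≠ ⟨0, by omega⟩ := by simp [Fin.ext_iff]
      have e2 : (⟨2, h2k⟩ : Fin k) ≠ (⟨0, by omega⟩ : Fin k) + 1 := by
        have h1v : ((1 : Fin k) : ℕ) = 1 := by
          rw [Fin.val_one']
          exact Nat.mod_eq_of_lt (by omega)
        simp [Fin.ext_iff, Fin.val_add, h1v, Nat.mod_eq_of_lt (show 0 + 1 < k by omega)]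
      simp only [if_true, if_false, Bool.cond_true, Bool.cond_false,
        if_neg e1, if_neg e2] at key
      exact one_div_ne_zero hkne key
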